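/- arXiv:2407.18216 — 9 statements merged into one kernel-verified Lean document; each statement's English description precedes it below -/
import Mathlib

section
/- Let Σ = {a, b} with a ≠ b, let u be any string over Σ, let k ≥ 1, and let x = a·u·a·b^k (the concatenation of the character a, the string u, the character a, and k copies of b). Then every border w of x with |w| > k has the form w = s·b^k, where s is a non-empty border of the string a·u·a. -/
/-- `w` is a border of `x`: a prefix and a suffix of `x` different from `x`. -/
def IsBorder {α : Type*} (w x : List α) : Prop :=
  w <+: x ∧ w <:+ x ∧ w ≠ x

/-- Lemma `lemma-border`, structure of long borders.
Over `Σ = {a, b}` with `a ≠ b`, let `u` be any string over `Σ`, `k ≥ 1`, and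
`x = a·u·a·b^k`. Then every border `w` of `x` with `|w| > k` has the form
`w = s·b^k` where `s` is a non-empty border of `a·u·a`. -/
theorem stmt_3 {α : Type*} (a b : α) (hab : a ≠ b)
    (u : List α) (hu : ∀ c ∈ u, c = a ∨ c = b)
    (k : ℕ) (hk : 1 ≤ k) (w : List α)
    (hw : IsBorder w ([a] ++ u ++ [a] ++ List.replicate k b))
    (hlen : k < w.length) :
    ∃ s : List α, s ≠ [] ∧ IsBorder s ([a] ++ u ++ [a]) ∧
      w = s ++ List.replicate k b := by
  obtain ⟨hpre, hsuf, hne⟩ := hw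
  set y : List α := [a] ++ u ++ [a] with hy
  set x : List α := y ++ List.replicate k b with hx
  -- b^k is a suffix of w
  have hbkx : List.replicate k b <:+ x := List.suffix_append y _
  have hbkw : List.replicate k b <:+ w := by
    have h1 : (List.replicate k b).reverse <+: x.reverse := List.reverse_prefix.mpr hbkx
    have h2 : w.reverse <+: x.reverse := List.reverse_prefix.mpr hsuf
    have := List.prefix_of_prefix_length_le h1 h2 (by simp; omega)
    exact List.reverse_prefix.mp (by simpa using this)
  obtain ⟨s, hs⟩ := hbkw
  -- s is a suffix of y
  obtain ⟨t, ht⟩ := hsuf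
  have hty : t ++ s = y := by
    have : (t ++ s) ++ List.replicate k b = y ++ List.replicate k b := by
      rw [List.append_assoc, hs, ht]
    exact List.append_cancel_right this
  have hsufs : s <:+ y := ⟨t, hty⟩
  -- lengths
  have hwlt : w.length < x.length := by
    rcases lt_or_eq_of_le hpre.length_le with h | h
    · exact h
    · exact absurd (List.prefix_iff_eq_take.mp hpre ▸ by rw [h, List.take_length]) hne
  have hslen : s.length = w.length - k := by
    have := congrArg List.length hs
    simp at this; omega
  have hxlen : x.length = y.length + k := by simp [hx]
  -- s is a prefix of y
  have hsprew : s <+: w := hs ▸ List.prefix_append s _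
  have hsprex : s <+: x := hsprew.trans hpre
  have hsprey : s <+: y :=
    List.prefix_of_prefix_length_le hsprex (List.prefix_append y _) (by omega)
  refine ⟨s, ?_, ⟨hsprey, hsufs, ?_⟩, hs.symm⟩
  · intro h; rw [h] at hslen; simp at hslen; omega
  · intro h
    have := congrArg List.length h
    omega
end

section
/- Let Σ = {a, b} with a ≠ b, let u be any string over Σ, let k ≥ 1, and let x = a·u·a·b^k. Then a string w is a non-empty border of x if and only if w = s·b^k for some non-empty border s of a·u·a such that s·b^k is a prefix of x. Consequently, |Border(x)| = k + max{|s| : s a non-empty border of a·u·a with s·b^k a prefix of x} if at least one such s exists, and |Border(x)| = 0 otherwise. -/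
lemma border_iff {α : Type*} {a b : α} (hab : a ≠ b) {v t : List α} (hv : v = a :: t)
    {k : ℕ} (hk : 1 ≤ k) (w : List α) :
    (w ≠ [] ∧ IsBorder w (v ++ List.replicate k b)) ↔
    (∃ s, s ≠ [] ∧ IsBorder s v ∧ w = s ++ List.replicate k b ∧
      (s ++ List.replicate k b) <+: (v ++ List.replicate k b)) := by
  constructor
  · rintro ⟨hw, hwp, hws, hwne⟩
    by_cases hlen : w.length ≤ k
    · exfalso
      have hsufr : w <:+ List.replicate k b :=
        List.suffix_of_suffix_length_le hws ⟨v, rfl⟩ (by simpa using hlen)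
      obtain ⟨c, w', rfl⟩ := List.exists_cons_of_ne_nil hw
      have hc : c = a := by
        have := hwp.head (by simp)
        subst hv; simpa using this
      have hcb : c = b := List.eq_of_mem_replicate (hsufr.sublist.subset (by simp))
      exact hab (hc ▸ hcb)
    · push_neg at hlen
      have hrw : List.replicate k b <:+ w :=
        List.suffix_of_suffix_length_le ⟨v, rfl⟩ hws (by simpa using hlen.le)
      obtain ⟨s, rfl⟩ := hrw
      have hslen : s.length + k ≤ v.length + k := by
        have := hwp.length_le; simpa using this
      have hsp : s <+: v :=
        List.prefix_of_prefix_length_le ((List.prefix_append s _).trans hwp)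
          (List.prefix_append v _) (by omega)
      have hss : s <:+ v := by
        obtain ⟨t', ht'⟩ := hws
        refine ⟨t', ?_⟩
        have : t' ++ s ++ List.replicate k b = v ++ List.replicate k b := by
          simpa [List.append_assoc] using ht'
        exact List.append_cancel_right this
      refine ⟨s, ?_, ⟨hsp, hss, ?_⟩, rfl, hwp⟩
      · rintro rfl
        simp at hlen
      · rintro rfl; exact hwne rfl
  · rintro ⟨s, hs, ⟨hsp, hss, hsne⟩, rfl, hpre⟩
    refine ⟨by simp [hs], hpre, ?_, ?_⟩
    · obtain ⟨t', ht'⟩ := hss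
      exact ⟨t', by rw [← List.append_assoc, ht']⟩
    · intro h
      exact hsne (List.append_cancel_right h)

/-- characterization of the non-empty borders of `a·u·a·b^k`.
Over `Σ = {a, b}` with `a ≠ b`, let `u` be any string over `Σ`, `k ≥ 1`, and
`x = a·u·a·b^k`.  A string `w` is a non-empty border of `x` iff `w = s·b^k` for some
non-empty border `s` of `a·u·a` with `s·b^k` a prefix of `x`.  Consequently, letting
`bx` denote the longest border of `x`: if at least one such `s` exists then
`|bx| = k + max{|s| : s non-empty border of a·u·a, s·b^k prefix of x}`
(witnessed by a maximal such `s`), and otherwise `|bx| = 0`. -/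
theorem stmt_6 {α : Type*} (a b : α) (hab : a ≠ b)
    (u : List α) (hu : ∀ c ∈ u, c = a ∨ c = b)
    (k : ℕ) (hk : 1 ≤ k) (bx : List α)
    (hbx : IsBorder bx ([a] ++ u ++ [a] ++ List.replicate k b))
    (hbxmax : ∀ w, IsBorder w ([a] ++ u ++ [a] ++ List.replicate k b) →
      w.length ≤ bx.length) :
    (∀ w : List α,
      (w ≠ [] ∧ IsBorder w ([a] ++ u ++ [a] ++ List.replicate k b)) ↔
      (∃ s : List α, s ≠ [] ∧ IsBorder s ([a] ++ u ++ [a]) ∧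
        w = s ++ List.replicate k b ∧
        (s ++ List.replicate k b) <+: ([a] ++ u ++ [a] ++ List.replicate k b))) ∧
    ((∃ s : List α, s ≠ [] ∧ IsBorder s ([a] ++ u ++ [a]) ∧
        (s ++ List.replicate k b) <+: ([a] ++ u ++ [a] ++ List.replicate k b)) →
      ∃ s : List α, s ≠ [] ∧ IsBorder s ([a] ++ u ++ [a]) ∧
        (s ++ List.replicate k b) <+: ([a] ++ u ++ [a] ++ List.replicate k b) ∧
        bx.length = k + s.length ∧
        (∀ s' : List α, s' ≠ [] → IsBorder s' ([a] ++ u ++ [a]) →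
          (s' ++ List.replicate k b) <+: ([a] ++ u ++ [a] ++ List.replicate k b) →
          s'.length ≤ s.length)) ∧
    ((¬ ∃ s : List α, s ≠ [] ∧ IsBorder s ([a] ++ u ++ [a]) ∧
        (s ++ List.replicate k b) <+: ([a] ++ u ++ [a] ++ List.replicate k b)) →
      bx.length = 0) := by
  have hxeq : [a] ++ u ++ [a] ++ List.replicate k b
      = ([a] ++ u ++ [a]) ++ List.replicate k b := by simp
  rw [hxeq] at hbx ⊢
  rw [hxeq] at hbxmax
  have hv : [a] ++ u ++ [a] = a :: (u ++ [a]) := by simp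
  have key := fun w => border_iff hab hv hk (w := w)
  refine ⟨key, ?_, ?_⟩
  · rintro ⟨s0, hs0, hb0, hp0⟩
    have hw0 := (key (s0 ++ List.replicate k b)).mpr ⟨s0, hs0, hb0, rfl, hp0⟩
    have hlen0 := hbxmax _ hw0.2
    have hbxne : bx ≠ [] := by
      intro h
      rw [h] at hlen0
      simp at hlen0
      omega
    obtain ⟨s, hs, hsb, heq, hpre⟩ := (key bx).mp ⟨hbxne, hbx⟩
    refine ⟨s, hs, hsb, hpre, by simp [heq]; omega, ?_⟩
    intro s' hs' hb' hp'
    have hw' := (key (s' ++ List.replicate k b)).mpr ⟨s', hs', hb', rfl, hp'⟩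
    have := hbxmax _ hw'.2
    rw [heq] at this
    simp at this
    exact this
  · intro hno
    by_contra h
    have hbxne : bx ≠ [] := fun hh => h (by simp [hh])
    obtain ⟨s, hs, hsb, heq, hpre⟩ := (key bx).mp ⟨hbxne, hbx⟩
    exact hno ⟨s, hs, hsb, hpre⟩
end

section
/- Let x be a string of length m ≥ 2 over an alphabet Σ, let a = x[0], suppose a occurs in x exactly m̄+1 times at positions 0 = δ(0) < δ(1) < ⋯ < δ(m̄), and let x̄ be the integer sequence of length m̄ with x̄[j] = δ(j+1) − δ(j). If p is a period of x with 1 ≤ p ≤ m − 1, then x[p] = a, and for the unique index i₀ with δ(i₀) = p one has: Σ_{j=0}^{i₀−1} x̄[j] = p, and i₀ is a period of x̄ (i.e., x̄[t] = x̄[t + i₀] for all 0 ≤ t < m̄ − i₀). -/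
/-- a period of `x` induces a period of its CDS representation.
`x : ℕ → α` is a string of length `m ≥ 2`, `a = x 0` occurs in `x` exactly `mbar + 1`
times at positions `0 = δ 0 < δ 1 < ⋯ < δ mbar`, and `xbar j = δ (j+1) - δ j` for
`j < mbar`.  If `p` is a period of `x` with `1 ≤ p ≤ m - 1`, then `x p = a`; moreover
there is a unique index `i₀ ≤ mbar` with `δ i₀ = p`, and for this `i₀` one has
`∑_{j=0}^{i₀-1} xbar j = p` and `i₀` is a period of `xbar` (so `1 ≤ i₀ ≤ mbar` and
`xbar t = xbar (t + i₀)` for all `t` with `t + i₀ < mbar`). -/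
theorem stmt_7 {α : Type*} (m mbar : ℕ) (hm : 2 ≤ m)
    (x : ℕ → α) (a : α) (ha : x 0 = a)
    (δ : ℕ → ℕ) (xbar : ℕ → ℕ) (hδ0 : δ 0 = 0)
    (hmono : ∀ i j, i < j → j ≤ mbar → δ i < δ j)
    (hlt : ∀ i, i ≤ mbar → δ i < m)
    (hocc : ∀ i, i < m → (x i = a ↔ ∃ j, j ≤ mbar ∧ δ j = i))
    (hxbar : ∀ j, j < mbar → xbar j = δ (j + 1) - δ j)
    (p : ℕ) (hp1 : 1 ≤ p) (hp2 : p ≤ m - 1)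
    (hper : ∀ i, i + p < m → x i = x (i + p)) :
    x p = a ∧
    (∃! i₀ : ℕ, i₀ ≤ mbar ∧ δ i₀ = p) ∧
    (∀ i₀ : ℕ, i₀ ≤ mbar → δ i₀ = p →
      (∑ j ∈ Finset.range i₀, xbar j) = p ∧
      1 ≤ i₀ ∧ i₀ ≤ mbar ∧
      ∀ t, t + i₀ < mbar → xbar t = xbar (t + i₀)) := by
  have hpm : p < m := by omega
  have hxp : x p = a := by
    have h := hper 0 (by omega)
    rw [zero_add] at h
    rw [← h, ha]
  have hmono' : ∀ i j, i ≤ j → j ≤ mbar → δ i ≤ δ j := by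
    intro i j hij hj
    rcases eq_or_lt_of_le hij with h | h
    · simp [h]
    · exact (hmono i j h hj).le
  have hlti : ∀ i j, i ≤ mbar → j ≤ mbar → δ i < δ j → i < j := by
    intro i j hi hj h
    by_contra hc
    push_neg at hc
    exact absurd (hmono' j i hc hi) (by omega)
  obtain ⟨i₀', hi₀'le, hδi₀'⟩ := (hocc p hpm).mp hxp
  -- sum lemma
  have hsum : ∀ n, n ≤ mbar → (∑ j ∈ Finset.range n, xbar j) = δ n := by
    intro n
    induction n with
    | zero => intro _; simp [hδ0]
    | succ k ih =>
      intro hk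
      rw [Finset.sum_range_succ, ih (by omega), hxbar k (by omega)]
      have := hmono' k (k + 1) (by omega) hk
      omega
  refine ⟨hxp, ⟨i₀', ⟨hi₀'le, hδi₀'⟩, ?_⟩, ?_⟩
  · rintro j ⟨hjle, hδj⟩
    by_contra hne
    rcases Nat.lt_or_ge j i₀' with h | h
    · exact absurd (hmono j i₀' h hi₀'le) (by omega)
    · have : i₀' < j := by omega
      exact absurd (hmono i₀' j this hjle) (by omega)
  · intro i₀ hi₀le hδi₀
    have hi₀1 : 1 ≤ i₀ := by
      rcases Nat.eq_zero_or_pos i₀ with h | h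
      · rw [h, hδ0] at hδi₀; omega
      · exact h
    -- shift claim
    have hshift : ∀ t, t + i₀ ≤ mbar → δ (t + i₀) = δ t + p := by
      intro t
      induction t with
      | zero => intro _; rw [zero_add, hδ0, zero_add, hδi₀]
      | succ t ih =>
        intro hle
        have hih : δ (t + i₀) = δ t + p := ih (by omega)
        have hmono1 : δ (t + i₀) < δ (t + 1 + i₀) := by
          apply hmono <;> omega
        -- backward direction
        have hge : δ (t + 1) + p ≤ δ (t + 1 + i₀) := by
          have hltm : δ (t + 1 + i₀) < m := hlt _ hle
          have hqp : δ (t + 1 + i₀) - p + p = δ (t + 1 + i₀) := by omega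
          have hxq : x (δ (t + 1 + i₀) - p) = a := by
            have h1 := hper (δ (t + 1 + i₀) - p) (by rw [hqp]; exact hlt _ hle)
            rw [hqp] at h1
            rw [h1]
            exact (hocc _ (hlt _ hle)).mpr ⟨t + 1 + i₀, hle, rfl⟩
          obtain ⟨j, hjle, hδj⟩ := (hocc _ (by omega)).mp hxq
          have hjt : t < j := by
            apply hlti t j (by omega) hjle
            omega
          have := hmono' (t + 1) j (by omega) hjle
          omega
        -- forward direction
        have hle2 : δ (t + 1 + i₀) ≤ δ (t + 1) + p := by
          have hrm : δ (t + 1) + p < m := by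
            have := hlt (t + 1 + i₀) hle
            omega
          have hxr : x (δ (t + 1) + p) = a := by
            rw [← hper (δ (t + 1)) hrm]
            exact (hocc _ (hlt (t + 1) (by omega))).mpr ⟨t + 1, by omega, rfl⟩
          obtain ⟨k, hkle, hδk⟩ := (hocc _ hrm).mp hxr
          have hkt : t + i₀ < k := by
            apply hlti (t + i₀) k (by omega) hkle
            have := hmono (t) (t + 1) (by omega) (by omega)
            omega
          have := hmono' (t + 1 + i₀) k (by omega) hkle
          omega
        omega
    refine ⟨by rw [hsum i₀ hi₀le, hδi₀], hi₀1, hi₀le, ?_⟩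
    intro t ht
    have h1 : δ (t + i₀) = δ t + p := hshift t (by omega)
    have h2 : δ (t + 1 + i₀) = δ (t + 1) + p := hshift (t + 1) (by omega)
    rw [hxbar t (by omega), hxbar (t + i₀) ht]
    have : t + i₀ + 1 = t + 1 + i₀ := by omega
    rw [this, h1, h2]
    omega
end

section
/- Let Σ = {a, b} with a ≠ b, let x be a string of length m ≥ 2 over Σ with x[0] = x[m−1] = a, suppose a occurs in x exactly m̄+1 times (so m̄ ≥ 1) at positions 0 = δ(0) < δ(1) < ⋯ < δ(m̄) = m−1, and let x̄ be the integer sequence of length m̄ with x̄[j] = δ(j+1) − δ(j). If q is a period of x̄ (1 ≤ q ≤ m̄), then s = Σ_{i=0}^{q−1} x̄[i] is a period of x. -/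
/-- a period of the CDS representation induces a period of `x`.
Over `Σ = {a, b}` with `a ≠ b`, `x : ℕ → α` is a string of length `m ≥ 2` over
`{a, b}` with `x 0 = x (m-1) = a`; `a` occurs in `x` exactly `mbar + 1` times
(`mbar ≥ 1`) at positions `0 = δ 0 < δ 1 < ⋯ < δ mbar = m - 1`, and
`xbar j = δ (j+1) - δ j` for `j < mbar`.  If `q` is a period of `xbar`
(`1 ≤ q ≤ mbar`), then `s = ∑_{i=0}^{q-1} xbar i` is a period of `x`, i.e.
`1 ≤ s ≤ m` and `x i = x (i + s)` for all `i` with `i + s < m`. -/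
theorem stmt_8 {α : Type*} (a b : α) (hab : a ≠ b)
    (m mbar : ℕ) (hm : 2 ≤ m) (hmbar : 1 ≤ mbar)
    (x : ℕ → α) (hbin : ∀ i, i < m → x i = a ∨ x i = b)
    (h0 : x 0 = a) (hlast : x (m - 1) = a)
    (δ : ℕ → ℕ) (xbar : ℕ → ℕ) (hδ0 : δ 0 = 0) (hδlast : δ mbar = m - 1)
    (hmono : ∀ i j, i < j → j ≤ mbar → δ i < δ j)
    (hocc : ∀ i, i < m → (x i = a ↔ ∃ j, j ≤ mbar ∧ δ j = i))
    (hxbar : ∀ j, j < mbar → xbar j = δ (j + 1) - δ j)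
    (q : ℕ) (hq1 : 1 ≤ q) (hq2 : q ≤ mbar)
    (hqper : ∀ t, t + q < mbar → xbar t = xbar (t + q)) :
    1 ≤ ∑ i ∈ Finset.range q, xbar i ∧
    (∑ i ∈ Finset.range q, xbar i) ≤ m ∧
    ∀ i, i + (∑ i ∈ Finset.range q, xbar i) < m →
      x i = x (i + ∑ i ∈ Finset.range q, xbar i) := by
  -- step lemma: δ (j+1) = δ j + xbar j for j < mbar
  have hstep : ∀ j, j < mbar → δ (j + 1) = δ j + xbar j := by
    intro j hj
    have hlt : δ j < δ (j + 1) := hmono j (j + 1) (by omega) (by omega)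
    rw [hxbar j hj]; omega
  -- telescoping: δ n = ∑_{i<n} xbar i for n ≤ mbar
  have htel : ∀ n, n ≤ mbar → δ n = ∑ i ∈ Finset.range n, xbar i := by
    intro n
    induction n with
    | zero => intro _; simpa using hδ0
    | succ n ih =>
      intro hn
      rw [Finset.sum_range_succ, ← ih (by omega), hstep n (by omega)]
  set s := ∑ i ∈ Finset.range q, xbar i with hs
  have hδq : δ q = s := htel q hq2
  -- shift lemma: δ (j + q) = δ j + s for j + q ≤ mbar
  have hshift : ∀ j, j + q ≤ mbar → δ (j + q) = δ j + s := by
    intro j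
    induction j with
    | zero => intro _; simpa [hδ0] using hδq
    | succ j ih =>
      intro hj
      have h1 : j + 1 + q = (j + q) + 1 := by omega
      rw [h1, hstep (j + q) (by omega), ih (by omega),
        ← hqper j (by omega), hstep j (by omega)]
      omega
  have hs1 : 1 ≤ s := by
    have := hmono 0 q (by omega) hq2
    omega
  have hsm : s ≤ m := by
    have : δ q ≤ δ mbar := by
      rcases eq_or_lt_of_le hq2 with h | h
      · rw [h]
      · exact le_of_lt (hmono q mbar h le_rfl)
    omega
  refine ⟨hs1, hsm, ?_⟩
  intro i hi
  have him : i < m := by omega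
  have key : x i = a ↔ x (i + s) = a := by
    rw [hocc i him, hocc (i + s) hi]
    constructor
    · rintro ⟨j, hj, rfl⟩
      have hjq : j + q ≤ mbar := by
        by_contra h
        push_neg at h
        have h1 : mbar - q < j := by omega
        have h2 : δ (mbar - q) < δ j := hmono _ _ h1 hj
        have h3 : δ (mbar - q + q) = δ (mbar - q) + s := hshift _ (by omega)
        have h4 : mbar - q + q = mbar := by omega
        rw [h4] at h3
        omega
      exact ⟨j + q, hjq, hshift j hjq⟩
    · rintro ⟨j, hj, hje⟩
      have hqj : q ≤ j := by
        by_contra h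
        push_neg at h
        have : δ j < δ q := hmono j q h hq2
        omega
      have h3 : δ (j - q + q) = δ (j - q) + s := hshift _ (by omega)
      have h4 : j - q + q = j := by omega
      rw [h4] at h3
      refine ⟨j - q, by omega, by omega⟩
  rcases hbin i him with h1 | h1 <;> rcases hbin (i + s) hi with h2 | h2
  · rw [h1, h2]
  · exact absurd (key.mp h1) (by rw [h2]; exact fun h => hab h.symm)
  · exact absurd (key.mpr h2) (by rw [h1]; exact fun h => hab h.symm)
  · rw [h1, h2]
end

section
/- Let Σ = {a, b} with a ≠ b, let x be a string of length m ≥ 2 over Σ with x[0] = x[m−1] = a, suppose a occurs in x exactly m̄+1 times (so m̄ ≥ 1) at positions 0 = δ(0) < δ(1) < ⋯ < δ(m̄) = m−1, and let x̄ be the integer sequence of length m̄ with x̄[j] = δ(j+1) − δ(j). Then the smallest period of x equals the sum of the first per(x̄) entries of x̄: per(x) = Σ_{i=0}^{per(x̄)−1} x̄[i], where per denotes the smallest period. -/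
/-- `per(x) = ∑_{i<per(x̄)} x̄[i]`.
Over `Σ = {a, b}` with `a ≠ b`, `x : ℕ → α` is a string of length `m ≥ 2` over
`{a, b}` with `x 0 = x (m-1) = a`; `a` occurs in `x` exactly `mbar + 1` times
(`mbar ≥ 1`) at positions `0 = δ 0 < δ 1 < ⋯ < δ mbar = m - 1`, and
`xbar j = δ (j+1) - δ j` for `j < mbar`.  If `p` is the smallest period of `x`
and `q` is the smallest period of `xbar`, then `p = ∑_{i=0}^{q-1} xbar i`. -/
theorem stmt_9 {α : Type*} (a b : α) (hab : a ≠ b)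
    (m mbar : ℕ) (hm : 2 ≤ m) (hmbar : 1 ≤ mbar)
    (x : ℕ → α) (hbin : ∀ i, i < m → x i = a ∨ x i = b)
    (h0 : x 0 = a) (hlast : x (m - 1) = a)
    (δ : ℕ → ℕ) (xbar : ℕ → ℕ) (hδ0 : δ 0 = 0) (hδlast : δ mbar = m - 1)
    (hmono : ∀ i j, i < j → j ≤ mbar → δ i < δ j)
    (hocc : ∀ i, i < m → (x i = a ↔ ∃ j, j ≤ mbar ∧ δ j = i))
    (hxbar : ∀ j, j < mbar → xbar j = δ (j + 1) - δ j)
    (p : ℕ)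
    (hp : 1 ≤ p ∧ p ≤ m ∧ ∀ i, i + p < m → x i = x (i + p))
    (hpmin : ∀ p', (1 ≤ p' ∧ p' ≤ m ∧ ∀ i, i + p' < m → x i = x (i + p')) → p ≤ p')
    (q : ℕ)
    (hq : 1 ≤ q ∧ q ≤ mbar ∧ ∀ t, t + q < mbar → xbar t = xbar (t + q))
    (hqmin : ∀ q', (1 ≤ q' ∧ q' ≤ mbar ∧ ∀ t, t + q' < mbar → xbar t = xbar (t + q')) →
      q ≤ q') :
    p = ∑ i ∈ Finset.range q, xbar i := by
  obtain ⟨hp1, hpm, hpper⟩ := hp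
  obtain ⟨hq1, hqm, hqper⟩ := hq
  -- monotonicity helpers
  have hmono' : ∀ i j : ℕ, i ≤ j → j ≤ mbar → δ i ≤ δ j := by
    intro i j hij hj
    rcases eq_or_lt_of_le hij with rfl | h
    · exact le_rfl
    · exact (hmono i j h hj).le
  have hlt_of_lt : ∀ i j : ℕ, i ≤ mbar → j ≤ mbar → δ i < δ j → i < j := by
    intro i j hi hj h
    by_contra hc
    push_neg at hc
    exact absurd (hmono' j i hc hi) (not_le.2 h)
  -- telescoping sum
  have hsum : ∀ j, j ≤ mbar → ∑ i ∈ Finset.range j, xbar i = δ j := by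
    intro j hj
    induction j with
    | zero => simpa using hδ0.symm
    | succ n ih =>
      rw [Finset.sum_range_succ, ih (by omega), hxbar n (by omega)]
      have := hmono n (n + 1) (Nat.lt_succ_self n) hj
      omega
  -- shift identity from the period of xbar
  have hshift1 : ∀ j, j + q ≤ mbar → δ (j + q) = δ j + δ q := by
    intro j hj
    have h1 := hsum (q + j) (by omega)
    have h2 := hsum j (by omega)
    have h3 := hsum q (by omega)
    rw [Finset.sum_range_add] at h1
    have h4 : ∀ i ∈ Finset.range j, xbar (q + i) = xbar i := by
      intro i hi
      simp only [Finset.mem_range] at hi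
      rw [show q + i = i + q by ring]
      exact (hqper i (by omega)).symm
    rw [Finset.sum_congr rfl h4, h3, h2] at h1
    rw [show j + q = q + j by ring]
    omega
  have hδq_pos : 0 < δ q := by
    have := hmono 0 q (by omega) hqm
    omega
  have hδqm : δ q ≤ m - 1 := by
    have := hmono' q mbar hqm le_rfl
    omega
  -- δ q is a period of x
  have hper1 : ∀ i, i + δ q < m → x i = x (i + δ q) := by
    intro i hi
    have hiq : i + δ q ≤ δ mbar := by omega
    rcases hbin i (by omega) with hia | hib
    · obtain ⟨j, hjm, hji⟩ := (hocc i (by omega)).1 hia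
      have hjq : j + q ≤ mbar := by
        by_contra hc
        push_neg at hc
        have h6 := hshift1 (mbar - q) (by omega)
        rw [show mbar - q + q = mbar by omega] at h6
        have h7 : δ (mbar - q) < δ j := hmono (mbar - q) j (by omega) hjm
        omega
      have h7 := hshift1 j hjq
      have h8 : δ (j + q) ≤ δ mbar := hmono' (j + q) mbar hjq le_rfl
      have h9 : x (i + δ q) = a :=
        (hocc (i + δ q) (by omega)).2 ⟨j + q, hjq, by omega⟩
      rw [hia, h9]
    · rcases hbin (i + δ q) hi with h2a | h2b
      · exfalso
        obtain ⟨k, hkm, hki⟩ := (hocc (i + δ q) hi).1 h2a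
        have hkq : q ≤ k := by
          by_contra hc
          push_neg at hc
          have := hmono k q hc hqm
          omega
        have h7 := hshift1 (k - q) (by omega)
        rw [show k - q + q = k by omega] at h7
        have hxia : x i = a :=
          (hocc i (by omega)).2 ⟨k - q, by omega, by omega⟩
        exact hab (hxia ▸ hib ▸ rfl)
      · rw [hib, h2b]
  -- p ≤ δ q
  have hple : p ≤ δ q := hpmin (δ q) ⟨hδq_pos, by omega, hper1⟩
  -- p is an a-position
  have hxp : x p = a := by
    have h := hpper 0 (by omega)
    simpa [h0] using h.symm
  obtain ⟨r, hrm, hrp⟩ := (hocc p (by omega)).1 hxp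
  have hr1 : 1 ≤ r := by
    rcases Nat.eq_zero_or_pos r with rfl | h
    · omega
    · exact h
  -- shift identity from the period p of x
  have hshift2 : ∀ j, j + r ≤ mbar → δ (j + r) = δ j + p := by
    intro j
    induction j with
    | zero => intro _; simp only [Nat.zero_add]; omega
    | succ n ih =>
      intro hn
      have ihn := ih (by omega)
      have hstep : δ (n + r) < δ (n + 1 + r) := hmono (n + r) (n + 1 + r) (by omega) hn
      have hm1 : δ (n + 1 + r) ≤ m - 1 := by
        have := hmono' (n + 1 + r) mbar hn le_rfl
        omega
      -- backward: δ (n+1+r) - p is an a-position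
      have hip : (δ (n + 1 + r) - p) + p = δ (n + 1 + r) := by omega
      have hxi : x (δ (n + 1 + r) - p) = a := by
        have h := hpper (δ (n + 1 + r) - p) (by omega)
        rw [h, hip]
        exact (hocc (δ (n + 1 + r)) (by omega)).2 ⟨n + 1 + r, hn, rfl⟩
      obtain ⟨j', hj'm, hj'i⟩ := (hocc (δ (n + 1 + r) - p) (by omega)).1 hxi
      have hj'n : n < j' := by
        apply hlt_of_lt n j' (by omega) hj'm
        omega
      have h3 : δ (n + 1) + p ≤ δ (n + 1 + r) := by
        have := hmono' (n + 1) j' hj'n hj'm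
        omega
      -- forward: δ (n+1) + p is an a-position
      have hxn1 : x (δ (n + 1)) = a := (hocc _ (by omega)).2 ⟨n + 1, by omega, rfl⟩
      have hfor : x (δ (n + 1) + p) = a := by
        rw [← hpper (δ (n + 1)) (by omega)]
        exact hxn1
      obtain ⟨k, hkm, hk⟩ := (hocc (δ (n + 1) + p) (by omega)).1 hfor
      have hnn1 : δ n < δ (n + 1) := hmono n (n + 1) (by omega) (by omega)
      have hkgt : n + r < k := by
        apply hlt_of_lt (n + r) k (by omega) hkm
        omega
      have h4 : δ (n + 1 + r) ≤ δ k := hmono' (n + 1 + r) k (by omega) hkm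
      omega
  -- r is a period of xbar
  have hrper : ∀ t, t + r < mbar → xbar t = xbar (t + r) := by
    intro t ht
    rw [hxbar t (by omega), hxbar (t + r) ht]
    have h1 := hshift2 t (by omega)
    have h2 := hshift2 (t + 1) (by omega)
    rw [show t + r + 1 = t + 1 + r by ring, h2, h1]
    omega
  have hqr : q ≤ r := hqmin r ⟨hr1, hrm, hrper⟩
  have hδqr : δ q ≤ δ r := hmono' q r hqr hrm
  rw [hsum q hqm]
  omega
end

section
/- Let x be a non-empty string, let c be a cover of x, and let w be a border of x with |w| ≥ |c|. Then c is a cover of w. -/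
/-- `v` occurs in `x` at position `j`:
`0 ≤ j ≤ |x| - |v|` and `x[j .. j+|v|-1] = v`. -/
def Occurs {α : Type*} (v x : List α) (j : ℕ) : Prop :=
  (x.drop j).take v.length = v

/-- `v` is a cover of `x`: every position of `x` lies inside some occurrence of `v`. -/
def IsCover {α : Type*} (v x : List α) : Prop :=
  ∀ i, i < x.length → ∃ j, Occurs v x j ∧ j ≤ i ∧ i < j + v.length

/-- Let `x` be a non-empty string, `c` a cover of `x`, and `w` a border of `x`
with `|w| ≥ |c|`. Then `c` is a cover of `w`. -/
theorem stmt_11 {α : Type*} (x c w : List α) (hx : x ≠ [])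
    (hc : IsCover c x) (hw : IsBorder w x) (hlen : c.length ≤ w.length) :
    IsCover c w := by
  obtain ⟨hpre, hsuf, _⟩ := hw
  obtain ⟨t, ht⟩ := hsuf
  have hd : t.length + w.length = x.length := by rw [← ht]; simp
  have hx0 : 0 < x.length := List.length_pos_iff.mpr hx
  obtain ⟨j0, hj0occ, hj0le, _⟩ := hc 0 hx0
  have hj0 : j0 = 0 := Nat.le_zero.mp hj0le
  subst hj0
  have hcpre : x.take c.length = c := by simpa [Occurs] using hj0occ
  have hcw0 : Occurs c w 0 := by
    obtain ⟨s, hs⟩ := hpre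
    unfold Occurs
    rw [List.drop_zero]
    rw [← hs] at hcpre
    rwa [List.take_append_of_le_length hlen] at hcpre
  intro i hi
  obtain ⟨j, hocc, hji, hij⟩ := hc (t.length + i) (by omega)
  by_cases hcase : t.length ≤ j
  · refine ⟨j - t.length, ?_, by omega, by omega⟩
    unfold Occurs at hocc ⊢
    rw [← ht] at hocc
    have : j = t.length + (j - t.length) := by omega
    rwa [this, List.drop_append, List.drop_eq_nil_of_le (by omega), Nat.add_sub_cancel_left, List.nil_append] at hocc
  · exact ⟨0, hcw0, by omega, by omega⟩
end

section
/- Let x be a non-empty string and define the border chain B₀ = x and B_{i+1} = Border(B_i) (the longest border of B_i) for i ≥ 0, so that the B_i strictly decrease in length until reaching the empty string. Let j* be the largest index j such that B_j is non-empty and B_j is a cover of B_g for every 0 ≤ g < j. Then B_{j*} is the shortest cover of x. -/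
/-- Every list covers itself. -/
lemma cover_self {α : Type*} (x : List α) : IsCover x x := by
  intro i hi
  exact ⟨0, by simp [Occurs], Nat.zero_le i, by simpa⟩

/-- A cover of a nonempty list is nonempty, a prefix, and a suffix. -/
lemma cover_pos {α : Type*} {v x : List α} (hx : x ≠ []) (hv : IsCover v x) :
    v ≠ [] ∧ v <+: x ∧ v <:+ x := by
  have hxlen : 0 < x.length := List.length_pos_iff.mpr hx
  obtain ⟨j, hocc, hj0, hj⟩ := hv 0 hxlen
  have hj0' : j = 0 := Nat.le_zero.mp hj0
  subst hj0'
  have hvne : v ≠ [] := by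
    intro h; rw [h] at hj; simp at hj
  have hvpre : v <+: x := by
    rw [Occurs, List.drop_zero] at hocc
    exact hocc ▸ List.take_prefix _ _
  obtain ⟨k, hocc2, hle, hlt⟩ := hv (x.length - 1) (by omega)
  have hlen_le : v.length ≤ x.length - k := by
    have h1 : ((x.drop k).take v.length).length ≤ (x.drop k).length :=
      List.length_take_le' _ _
    rw [hocc2, List.length_drop] at h1
    exact h1
  have hk : k = x.length - v.length := by omega
  have hdrop : x.drop k = v := by
    rw [Occurs] at hocc2
    rw [← hocc2]
    symm
    apply List.take_of_length_le
    rw [List.length_drop]; omega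
  exact ⟨hvne, hvpre, ⟨x.take k, by rw [← hdrop]; simp⟩⟩

/-- If `v` covers `x`, `v` is a suffix of `w`, and `w` is a prefix of `x`,
then `v` covers `w`. -/
lemma cover_of_suffix_prefix {α : Type*} {v w x : List α}
    (hv : IsCover v x) (hsuf : v <:+ w) (hpre : w <+: x) : IsCover v w := by
  intro i hi
  have hwx : w.length ≤ x.length := hpre.length_le
  have hvw : v.length ≤ w.length := hsuf.length_le
  obtain ⟨j, hocc, hji, hij⟩ := hv i (lt_of_lt_of_le hi hwx)
  by_cases h : j + v.length ≤ w.length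
  · refine ⟨j, ?_, hji, hij⟩
    rw [Occurs] at hocc ⊢
    obtain ⟨t, rfl⟩ := hpre
    rw [List.drop_append_of_le_length (by omega),
        List.take_append_of_le_length (by rw [List.length_drop]; omega)] at hocc
    exact hocc
  · refine ⟨w.length - v.length, ?_, by omega, by omega⟩
    rw [Occurs]
    obtain ⟨t, rfl⟩ := hsuf
    have hlen : (t ++ v).length - v.length = t.length := by simp
    rw [hlen, List.drop_left, List.take_length]

/-- correctness of the border-chain algorithm for shortest covers.
Let `x` be a non-empty string and let `B 0 = x`, `B (i+1) = Border (B i)` the longest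
border of `B i` (with `B (i+1) = []` once `B i = []`).  Let `jstar` be the largest
index `j` such that `B j` is non-empty and `B j` is a cover of `B g` for every
`g < j`.  Then `B jstar` is the shortest cover of `x`. -/
theorem stmt_13 {α : Type*} (x : List α) (hx : x ≠ [])
    (B : ℕ → List α) (hB0 : B 0 = x)
    (hchain : ∀ i, B i ≠ [] → IsBorder (B (i + 1)) (B i) ∧
      ∀ w, IsBorder w (B i) → w.length ≤ (B (i + 1)).length)
    (hstop : ∀ i, B i = [] → B (i + 1) = [])
    (jstar : ℕ)
    (hjs : B jstar ≠ [] ∧ ∀ g, g < jstar → IsCover (B jstar) (B g))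
    (hjsmax : ∀ j, B j ≠ [] → (∀ g, g < j → IsCover (B j) (B g)) → j ≤ jstar) :
    IsCover (B jstar) x ∧ ∀ v, IsCover v x → (B jstar).length ≤ v.length := by
  -- each step is a prefix and a suffix
  have hstep : ∀ i, B (i + 1) <+: B i ∧ B (i + 1) <:+ B i := by
    intro i
    by_cases h : B i = []
    · rw [hstop i h, h]
      exact ⟨List.nil_prefix, List.nil_suffix⟩
    · exact ⟨(hchain i h).1.1, (hchain i h).1.2.1⟩
  have hpre : ∀ i k, i ≤ k → B k <+: B i := by
    intro i k hik
    induction k, hik using Nat.le_induction with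
    | base => exact List.prefix_rfl
    | succ k hk ih => exact (hstep k).1.trans ih
  have hsuf : ∀ i k, i ≤ k → B k <:+ B i := by
    intro i k hik
    induction k, hik using Nat.le_induction with
    | base => exact List.suffix_rfl
    | succ k hk ih => exact (hstep k).2.trans ih
  -- every border of some B i appears further along the chain
  have chain_all : ∀ n i v, (B i).length ≤ n → IsBorder v (B i) →
      ∃ m, i < m ∧ v = B m := by
    intro n
    induction n with
    | zero =>
      intro i v hle hb
      have hnil : B i = [] := List.length_eq_zero_iff.mp (Nat.le_zero.mp hle)
      rw [hnil] at hb
      exact absurd (List.prefix_nil.mp hb.1) hb.2.2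
    | succ n ih =>
      intro i v hle hb
      have hne : B i ≠ [] := by
        intro h
        rw [h] at hb
        exact hb.2.2 (List.prefix_nil.mp hb.1)
      obtain ⟨hbord, hmax⟩ := hchain i hne
      have hvle : v.length ≤ (B (i + 1)).length := hmax v hb
      by_cases heq : v.length = (B (i + 1)).length
      · have hvp : v <+: B (i + 1) :=
          List.prefix_of_prefix_length_le hb.1 hbord.1 (le_of_eq heq)
        exact ⟨i + 1, Nat.lt_succ_self i, hvp.eq_of_length heq⟩
      · have hb' : IsBorder v (B (i + 1)) := by
          refine ⟨List.prefix_of_prefix_length_le hb.1 hbord.1 hvle,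
                  List.suffix_of_suffix_length_le hb.2.1 hbord.2.1 hvle, ?_⟩
          intro h; exact heq (congrArg List.length h)
        have hlt : (B (i + 1)).length < (B i).length := by
          have h1 := hbord.1.length_le
          rcases Nat.lt_or_ge (B (i + 1)).length (B i).length with h | h
          · exact h
          · exact absurd (hbord.1.eq_of_length (le_antisymm h1 h)) hbord.2.2
        obtain ⟨m, him, hvm⟩ := ih (i + 1) v (by omega) hb'
        exact ⟨m, by omega, hvm⟩
  constructor
  · rcases Nat.eq_zero_or_pos jstar with h | h
    · rw [h, hB0]; exact cover_self x
    · have := hjs.2 0 h; rwa [hB0] at this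
  · intro v hv
    obtain ⟨hvne, hvpre, hvsuf⟩ := cover_pos hx hv
    by_cases hvx : v = x
    · subst hvx
      have h1 := (hpre 0 jstar (Nat.zero_le _)).length_le
      rwa [hB0] at h1
    · have hbord : IsBorder v (B 0) := by rw [hB0]; exact ⟨hvpre, hvsuf, hvx⟩
      obtain ⟨m, hm0, rfl⟩ := chain_all (B 0).length 0 v le_rfl hbord
      have hcov : ∀ g, g < m → IsCover (B m) (B g) := by
        intro g hg
        refine cover_of_suffix_prefix hv (hsuf g m (le_of_lt hg)) ?_
        rw [← hB0]; exact hpre 0 g (Nat.zero_le g)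
      have hm : m ≤ jstar := hjsmax m hvne hcov
      exact (hpre m jstar hm).length_le
end

section
/- Let w be a non-empty string and let p be a period of w (1 ≤ p ≤ |w|). Then the prefix of w of length p + (|w| mod p) is a cover of w. Equivalently, if w = uʳu′ where |u| = p, r ≥ 1, and u′ is the (possibly empty) proper prefix of u of length |w| mod p, then u·u′ covers w. -/
/-- Let `w` be a non-empty string and `p` a period of `w` (`1 ≤ p ≤ |w|` and
`w[i] = w[i+p]` whenever `i + p < |w|`).  Then the prefix of `w` of length
`p + (|w| mod p)` is a cover of `w`. -/
theorem stmt_14 {α : Type*} (w : List α) (hw : w ≠ [])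
    (p : ℕ) (hp1 : 1 ≤ p) (hp2 : p ≤ w.length)
    (hper : ∀ i, i + p < w.length → w[i]? = w[i + p]?) :
    IsCover (w.take (p + w.length % p)) w := by
  intro i hi
  set n := w.length with hn
  have hdm := Nat.div_add_mod n p
  obtain ⟨m', hm'⟩ : ∃ m', n / p = m' + 1 :=
    ⟨n / p - 1, by have := (Nat.one_le_div_iff hp1).mpr hp2; omega⟩
  set r := n % p with hr
  have hrp : r < p := Nat.mod_lt _ hp1
  have hsm : (m' + 1) * p = m' * p + p := by ring
  have hnn : m' * p + p + r = n := by rw [← hdm, hm']; ring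
  -- iterated period
  have key : ∀ k a, a + k * p < n → w[a]? = w[a + k * p]? := by
    intro k
    induction k with
    | zero => simp
    | succ k ih =>
      intro a h
      have hkp : a + (k + 1) * p = (a + p) + k * p := by ring
      have h1 : a + p < n := by nlinarith
      rw [hkp, ← ih (a + p) (by omega)]
      exact hper a h1
  have keyE : ∀ k a b, (hb : b = a + k * p) → (h : b < n) → w[a]'(by omega) = w[b]'h := by
    intro k a b hb h
    subst hb
    have := key k a h
    rwa [List.getElem?_eq_getElem (by omega),
      List.getElem?_eq_getElem (by omega), Option.some_inj] at this
  set k := min (i / p) m' with hk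
  have hkm : k ≤ m' := min_le_right _ _
  have hkpb : k * p ≤ m' * p := Nat.mul_le_mul_right _ hkm
  have hdpi := Nat.div_add_mod i p
  have hipm : i % p < p := Nat.mod_lt _ hp1
  have hji : k * p ≤ i := by
    have h1 : k * p ≤ (i / p) * p := Nat.mul_le_mul_right _ (min_le_left _ _)
    have h2 : (i / p) * p ≤ i := Nat.div_mul_le_self _ _
    omega
  have hjL : k * p + (p + r) ≤ n := by omega
  have hle : p + r ≤ n := by omega
  have hvlen : (w.take (p + r)).length = p + r := by
    simp [hle, ← hn]
  refine ⟨k * p, ?_, hji, ?_⟩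
  · show (w.drop (k * p)).take (w.take (p + r)).length = w.take (p + r)
    rw [hvlen]
    apply List.ext_getElem
    · simp; omega
    · intro a h1 h2
      have ha : a < p + r := by simp at h2; omega
      simp only [List.getElem_take, List.getElem_drop]
      exact (keyE k a (k * p + a) (by omega) (by omega)).symm
  · rw [hvlen]
    have hcomm : i / p * p = p * (i / p) := Nat.mul_comm _ _
    rcases le_or_gt (i / p) m' with h | h
    · have hke : k = i / p := by omega
      have : k * p = i / p * p := by rw [hke]
      omega
    · have hke : k = m' := by omega
      have : k * p = m' * p := by rw [hke]
      omega
end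

section
/- Let x be a non-empty string, let w be a cover of x, and let p be a period of w (1 ≤ p ≤ |w|). Then the prefix of w of length p + (|w| mod p) is a cover of x. In particular, any cover of x whose length exceeds p + (|w| mod p) for some period p of it can be replaced by a strictly shorter cover of x. -/
lemma per_mul {α : Type*} {w : List α} {p : ℕ}
    (hper : ∀ i, i + p < w.length → w[i]? = w[i + p]?) :
    ∀ k t, t + k * p < w.length → w[t]? = w[t + k * p]? := by
  intro k
  induction k with
  | zero => simp
  | succ k ih =>
    intro t ht
    rw [Nat.succ_mul] at ht
    have h1 : t + k * p < w.length := by omega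
    rw [ih t h1, hper (t + k * p) (by omega)]
    congr 1
    rw [Nat.succ_mul]
    omega

lemma occurs_trans {α : Type*} {v w x : List α} {j k : ℕ}
    (hv : (w.drop k).take v.length = v) (hwx : (x.drop j).take w.length = w)
    (hk : k + v.length ≤ w.length) :
    (x.drop (j + k)).take v.length = v := by
  apply List.ext_getElem?
  intro n
  have hxlen : w.length ≤ x.length - j := by
    have := congrArg List.length hwx
    simp [List.length_take, List.length_drop] at this
    omega
  by_cases hn : n < v.length
  · have h1 : w[k + n]? = v[n]? := by
      rw [← hv, List.getElem?_take_of_lt hn, List.getElem?_drop]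
    have h2 : x[j + (k + n)]? = w[k + n]? := by
      rw [← hwx, List.getElem?_take_of_lt (by omega), List.getElem?_drop]
    rw [List.getElem?_take_of_lt hn, List.getElem?_drop, ← h1, ← h2]
    congr 1
    omega
  · have hln : v.length ≤ n := by omega
    rw [List.getElem?_eq_none_iff.2, List.getElem?_eq_none_iff.2 (by simpa using hln)]
    simp [List.length_take, List.length_drop]
    omega

/-- Let `x` be a non-empty string, `w` a cover of `x`, and `p` a period of `w`
(`1 ≤ p ≤ |w|`).  Then the prefix of `w` of length `p + (|w| mod p)` is a cover
of `x`.  In particular, any cover of `x` whose length exceeds `p + (|w| mod p)`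
for some period `p` of it can be replaced by a strictly shorter cover of `x`. -/
theorem stmt_16 {α : Type*} (x w : List α) (hx : x ≠ [])
    (hw : IsCover w x)
    (p : ℕ) (hp1 : 1 ≤ p) (hp2 : p ≤ w.length)
    (hper : ∀ i, i + p < w.length → w[i]? = w[i + p]?) :
    IsCover (w.take (p + w.length % p)) x ∧
    (p + w.length % p < w.length →
      ∃ v : List α, IsCover v x ∧ v.length < w.length) := by
  set r := w.length % p with hr
  set q := p + r with hqdef
  set m := w.length / p with hm
  have hm1 : 1 ≤ m := (Nat.one_le_div_iff hp1).2 hp2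
  have hwl : p * m + r = w.length := Nat.div_add_mod w.length p
  have hpm : p * 1 ≤ p * m := Nat.mul_le_mul_left p hm1
  have hq : q ≤ w.length := by omega
  have hvlen : (w.take q).length = q := by simp [List.length_take]; omega
  have hocc : ∀ k, k < m → (w.drop (k * p)).take q = w.take q := by
    intro k hk
    have hkm : (k + 1) * p ≤ m * p := Nat.mul_le_mul_right p hk
    rw [Nat.add_mul, Nat.mul_comm m p] at hkm
    have hkq : k * p + q ≤ w.length := by omega
    apply List.ext_getElem?
    intro n
    by_cases hn : n < q
    · rw [List.getElem?_take_of_lt hn, List.getElem?_take_of_lt hn, List.getElem?_drop]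
      have h := per_mul hper k n (by omega)
      rw [Nat.add_comm (k * p) n, ← h]
    · rw [List.getElem?_eq_none_iff.2, List.getElem?_eq_none_iff.2] <;>
        simp [List.length_take, List.length_drop] <;> omega
  have hcov : ∀ i, i < w.length → ∃ k, k < m ∧ k * p ≤ i ∧ i < k * p + q := by
    intro i hi
    have hd := Nat.div_add_mod i p
    have hmo : i % p < p := Nat.mod_lt _ hp1
    rcases le_or_gt (i / p) (m - 1) with h | h
    · refine ⟨i / p, by omega, Nat.div_mul_le_self i p, ?_⟩
      have : (i / p) * p = p * (i / p) := Nat.mul_comm _ _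
      omega
    · refine ⟨m - 1, by omega, ?_, ?_⟩
      · calc (m - 1) * p ≤ (i / p) * p := Nat.mul_le_mul_right p (by omega)
          _ ≤ i := Nat.div_mul_le_self i p
      · have h1 : (m - 1) * p + p = m * p := by
          rw [← Nat.succ_mul]; congr 1; omega
        have h2 : m * p = p * m := Nat.mul_comm _ _
        omega
  have main : IsCover (w.take q) x := by
    intro i hi
    obtain ⟨j, hj, hji, hij⟩ := hw i hi
    obtain ⟨k, hk, hki, hik⟩ := hcov (i - j) (by omega)
    have hkm : (k + 1) * p ≤ m * p := Nat.mul_le_mul_right p hk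
    rw [Nat.add_mul, Nat.mul_comm m p] at hkm
    refine ⟨j + k * p, ?_, by omega, by omega⟩
    unfold Occurs
    exact occurs_trans (by rw [hvlen]; exact hocc k hk) hj (by omega)
  exact ⟨main, fun h => ⟨w.take q, main, by omega⟩⟩
end
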